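/- arXiv:0801.3964 — 2 statements merged into one kernel-verified Lean document; each statement's English description precedes it below -/
import Mathlib

section
/- Let r ≥ 1 and let u_0, ..., u_{r-1} be indeterminates with u_{-1} = u_r = 1 and x_i = (u_{i-1} + u_{i+1})/u_i for 0 ≤ i ≤ r−1. Then for every 0 ≤ i ≤ r−1, u_i ∈ ℚ(x_0, ..., x_{r-1}); explicitly, u_{r-1} = (P_{r-1}(x_0, ..., x_{r-2}) + 1)/P_r(x_0, ..., x_{r-1}). -/
open MvPolynomial Polynomial

/-- Generalized Chebyshev evaluation: `cheb n t = P_n(t 0, ..., t (n-1))`,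
where `P_0 = 1`, `P_1(t_0) = t_0`, and
`P_{n+1}(t_0,...,t_n) = t_n * P_n(t_0,...,t_{n-1}) - P_{n-1}(t_0,...,t_{n-2})`. -/
def cheb {R : Type*} [CommRing R] : ℕ → (ℕ → R) → R
  | 0, _ => 1
  | 1, t => t 0
  | (n + 2), t => t (n + 1) * cheb (n + 1) t - cheb n t

/-- The field `ℚ(u_0, ..., u_{r-1})`. -/
abbrev FF (r : ℕ) := FractionRing (MvPolynomial (Fin r) ℚ)

/-- The indeterminates `u_i` for `0 ≤ i < r`, extended by `u_i = 1` outside this range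
(so that `u_{-1} = u_r = 1`). -/
noncomputable def uu (r : ℕ) (i : ℤ) : FF r :=
  if h : 0 ≤ i ∧ i < r then
    algebraMap (MvPolynomial (Fin r) ℚ) (FF r) (X (⟨i.toNat, by omega⟩ : Fin r))
  else 1

/-- The cluster characters of the simple modules: `x_i = (u_{i-1} + u_{i+1}) / u_i`. -/
noncomputable def xx (r : ℕ) (i : ℤ) : FF r := (uu r (i - 1) + uu r (i + 1)) / uu r i

lemma uu_ne_zero (r : ℕ) (i : ℤ) : uu r i ≠ 0 := by
  unfold uu
  split_ifs with h
  · simp [IsFractionRing.to_map_eq_zero_iff, MvPolynomial.X_ne_zero]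
  · exact one_ne_zero

lemma uu_eq_one (r : ℕ) (i : ℤ) (h : i < 0 ∨ (r : ℤ) ≤ i) : uu r i = 1 := by
  unfold uu
  rw [dif_neg (by omega)]

lemma xx_mul (r : ℕ) (i : ℤ) : xx r i * uu r i = uu r (i - 1) + uu r (i + 1) := by
  unfold xx
  rw [div_mul_cancel₀ _ (uu_ne_zero r i)]

/-- Polynomial lift of `uu`. -/
noncomputable def UU (r : ℕ) (i : ℤ) : MvPolynomial (Fin r) ℚ :=
  if h : 0 ≤ i ∧ i < r then X (⟨i.toNat, by omega⟩ : Fin r) else 1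

lemma algebraMap_UU (r : ℕ) (i : ℤ) :
    algebraMap (MvPolynomial (Fin r) ℚ) (FF r) (UU r i) = uu r i := by
  unfold UU uu
  split_ifs <;> simp

lemma eval_one_UU (r : ℕ) (i : ℤ) : eval (fun _ => (1 : ℚ)) (UU r i) = 1 := by
  unfold UU
  split_ifs <;> simp

/-- Polynomial numerators of the Chebyshev values. -/
noncomputable def FP (r : ℕ) : ℕ → MvPolynomial (Fin r) ℚ
  | 0 => 1
  | 1 => 1 + UU r 1
  | (n + 2) => (UU r n + UU r (n + 2)) * FP r (n + 1) - UU r n * UU r (n + 1) * FP r n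

lemma eval_one_FP (r : ℕ) : ∀ n, eval (fun _ => (1 : ℚ)) (FP r n) = n + 1 := by
  have key : ∀ n, eval (fun _ => (1 : ℚ)) (FP r n) = n + 1 ∧
      eval (fun _ => (1 : ℚ)) (FP r (n + 1)) = n + 2 := by
    intro n
    induction n with
    | zero => constructor <;> simp [FP, eval_one_UU] <;> norm_num
    | succ k ih =>
      refine ⟨by rw [ih.2]; push_cast; ring, ?_⟩
      show eval _ (FP r (k + 2)) = _
      rw [FP]
      simp only [map_sub, map_add, map_mul, eval_one_UU, ih.1, ih.2]
      push_cast; ring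
  exact fun n => (key n).1

lemma cheb_prod (r : ℕ) : ∀ n, cheb n (fun k => xx r k) * ∏ i ∈ Finset.range n, uu r i
    = algebraMap (MvPolynomial (Fin r) ℚ) (FF r) (FP r n) := by
  have key : ∀ n, (cheb n (fun k => xx r k) * ∏ i ∈ Finset.range n, uu r i
      = algebraMap (MvPolynomial (Fin r) ℚ) (FF r) (FP r n)) ∧
      (cheb (n + 1) (fun k => xx r k) * ∏ i ∈ Finset.range (n + 1), uu r i
      = algebraMap (MvPolynomial (Fin r) ℚ) (FF r) (FP r (n + 1))) := by
    intro n
    induction n with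
    | zero =>
      constructor
      · simp [cheb, FP]
      · have hx := xx_mul r 0
        rw [uu_eq_one r (0 - 1) (by omega), show (0 : ℤ) + 1 = 1 by ring] at hx
        simp only [cheb, FP, map_add, map_one, algebraMap_UU]
        rw [Finset.prod_range_one]
        push_cast
        linear_combination hx
    | succ k ih =>
      refine ⟨ih.2, ?_⟩
      have hx := xx_mul r ((k : ℤ) + 1)
      rw [show (k : ℤ) + 1 - 1 = (k : ℤ) by ring,
        show (k : ℤ) + 1 + 1 = (k : ℤ) + 2 by ring] at hx
      have hp : (∏ i ∈ Finset.range (k + 1), uu r (i : ℤ))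
          = (∏ i ∈ Finset.range k, uu r (i : ℤ)) * uu r (k : ℤ) :=
        Finset.prod_range_succ _ _
      show cheb (k + 2) _ * _ = _
      rw [cheb, FP, Finset.prod_range_succ]
      simp only [map_sub, map_add, map_mul, algebraMap_UU]
      rw [← ih.1, ← ih.2]
      push_cast
      linear_combination (cheb (k + 1) fun k => xx r (k : ℤ)) *
          (∏ i ∈ Finset.range (k + 1), uu r (i : ℤ)) * hx
        - (cheb k fun k => xx r (k : ℤ)) * uu r ((k : ℤ) + 1) * hp
  exact fun n => (key n).1

lemma prod_uu_ne_zero (r n : ℕ) : (∏ i ∈ Finset.range n, uu r i) ≠ 0 :=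
  Finset.prod_ne_zero_iff.2 fun i _ => uu_ne_zero r i

lemma cheb_ne_zero (r n : ℕ) : cheb n (fun k => xx r k) ≠ 0 := by
  intro h
  have hp := cheb_prod r n
  rw [h, zero_mul] at hp
  have h0 : (FP r n) = 0 := by
    apply IsFractionRing.injective (MvPolynomial (Fin r) ℚ) (FF r)
    rw [← hp, map_zero]
  have he := eval_one_FP r n
  rw [h0] at he
  simp at he
  exact absurd he (by positivity)

lemma wron (r : ℕ) : ∀ n : ℕ, cheb (n + 1) (fun k => xx r k) * uu r n
    - cheb n (fun k => xx r k) * uu r (n + 1) = 1 := by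
  intro n
  induction n with
  | zero =>
    have hx := xx_mul r 0
    rw [uu_eq_one r (0 - 1) (by omega), show (0 : ℤ) + 1 = 1 by ring] at hx
    simp only [cheb]
    push_cast
    linear_combination hx
  | succ k ih =>
    have hx := xx_mul r ((k : ℤ) + 1)
    rw [show (k : ℤ) + 1 - 1 = (k : ℤ) by ring] at hx
    show cheb (k + 2) _ * _ - _ = 1
    rw [cheb]
    push_cast at ih ⊢
    linear_combination cheb (k + 1) (fun k => xx r k) * hx + ih

noncomputable def SS (r : ℕ) : IntermediateField ℚ (FF r) :=
  IntermediateField.adjoin ℚ (Set.range fun j : Fin r => xx r j)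

lemma xx_mem (r : ℕ) (k : ℕ) (hk : k < r) : xx r (k : ℤ) ∈ SS r :=
  IntermediateField.subset_adjoin _ _ ⟨⟨k, hk⟩, rfl⟩

lemma cheb_mem (r : ℕ) : ∀ n, n ≤ r → cheb n (fun k => xx r k) ∈ SS r := by
  have key : ∀ n, (n ≤ r → cheb n (fun k => xx r k) ∈ SS r) ∧
      (n + 1 ≤ r → cheb (n + 1) (fun k => xx r k) ∈ SS r) := by
    intro n
    induction n with
    | zero =>
      refine ⟨fun _ => ?_, fun h => ?_⟩
      · simpa [cheb] using one_mem (SS r)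
      · simpa [cheb] using xx_mem r 0 (by omega)
    | succ k ih =>
      refine ⟨ih.2, fun h => ?_⟩
      show cheb (k + 2) _ ∈ SS r
      rw [cheb]
      exact sub_mem (mul_mem (xx_mem r (k + 1) (by omega)) (ih.2 (by omega)))
        (ih.1 (by omega))
  exact fun n => (key n).1

lemma uu_mem_aux (r : ℕ) : ∀ k : ℕ, k ≤ r → uu r ((r : ℤ) - k) ∈ SS r := by
  intro k
  induction k with
  | zero =>
    intro _
    rw [uu_eq_one r _ (by omega)]
    exact one_mem _
  | succ m ih =>
    intro h
    set n : ℕ := r - m - 1 with hn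
    have harg : (r : ℤ) - ((m : ℤ) + 1) = (n : ℤ) := by omega
    have harg2 : ((n : ℤ) + 1) = (r : ℤ) - (m : ℤ) := by omega
    have h1 : uu r ((n : ℤ) + 1) ∈ SS r := by rw [harg2]; exact ih (by omega)
    have hw := wron r n
    push_cast at hw
    have hcne : cheb (n + 1) (fun k => xx r k) ≠ 0 := cheb_ne_zero r (n + 1)
    have huu : uu r (n : ℤ) =
        (1 + cheb n (fun k => xx r k) * uu r ((n : ℤ) + 1)) / cheb (n + 1) (fun k => xx r k) := by
      rw [eq_div_iff hcne]
      linear_combination hw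
    push_cast
    rw [harg, huu]
    exact div_mem (add_mem (one_mem _) (mul_mem (cheb_mem r n (by omega)) h1))
      (cheb_mem r (n + 1) (by omega))

/-- each `u_i` lies in the subfield `ℚ(x_0, ..., x_{r-1})`, and explicitly
`u_{r-1} = (P_{r-1}(x_0, ..., x_{r-2}) + 1) / P_r(x_0, ..., x_{r-1})`. -/
theorem uu_mem_adjoin_xx (r : ℕ) (hr : 1 ≤ r) :
    (∀ i : Fin r, uu r i ∈ IntermediateField.adjoin ℚ (Set.range fun j : Fin r => xx r j)) ∧
      uu r ((r : ℤ) - 1) =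
        (cheb (r - 1) (fun k => xx r k) + 1) / cheb r (fun k => xx r k) := by
  obtain ⟨s, rfl⟩ : ∃ s, r = s + 1 := ⟨r - 1, by omega⟩
  constructor
  · intro i
    have hi := i.isLt
    have hmem := uu_mem_aux (s + 1) (s + 1 - i.val) (by omega)
    have harg : ((s + 1 : ℕ) : ℤ) - ((s + 1 - i.val : ℕ) : ℤ) = (i.val : ℤ) := by omega
    rw [harg] at hmem
    exact hmem
  · have hw := wron (s + 1) s
    have h1 : uu (s + 1) ((s : ℤ) + 1) = 1 := uu_eq_one _ _ (by omega)
    push_cast at hw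
    rw [h1, mul_one] at hw
    rw [eq_div_iff (cheb_ne_zero (s + 1) (s + 1))]
    have hs : s + 1 - 1 = s := by omega
    rw [hs]
    push_cast
    rw [show (s : ℤ) + 1 - 1 = (s : ℤ) by ring]
    linear_combination hw
end

section
/- For all integers m, n, k, j, p with p ≥ 1, 0 ≤ j ≤ p−1, 0 < j + kp < n, and m > n − j − kp, setting i = j + kp, the following identity holds in ℤ[t_0, ..., t_{p-1}] for the rank-p generalized Chebyshev polynomials (with indices of quasi-simples taken mod p): P_{m,p}^{(j)} · P_{n,p}^{(0)} = P_{m+i,p}^{(0)} · P_{n-i,p}^{(j)} + P_{i-1,p}^{(0)} · P_{m+i-n-1,p}^{(n+1 mod p)}, where P_{l,p}^{(s)} denotes P_l evaluated at the variables t_{s mod p}, t_{(s+1) mod p}, ..., t_{(s+l-1) mod p}. -/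
open MvPolynomial Polynomial

/-- `P_{l,p}^{(s)}`: the polynomial in `ℤ[t_0, ..., t_{p-1}]` obtained by evaluating
`P_l` at `t_{s mod p}, t_{(s+1) mod p}, ..., t_{(s+l-1) mod p}`. -/
noncomputable def chebP (l p s : ℕ) : MvPolynomial ℕ ℤ :=
  cheb l (fun q => X ((s + q) % p))

section Aux

variable {R : Type*} [CommRing R]

theorem cheb_congr' : ∀ (l : ℕ) (t t' : ℕ → R), (∀ q, q < l → t q = t' q) → cheb l t = cheb l t'
  | 0, _, _, _ => rfl
  | 1, t, t', h => h 0 (by omega)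
  | n+2, t, t', h => by
    show t (n+1) * cheb (n+1) t - cheb n t = t' (n+1) * cheb (n+1) t' - cheb n t'
    rw [cheb_congr' (n+1) t t' (fun q hq => h q (by omega)),
        cheb_congr' n t t' (fun q hq => h q (by omega)), h (n+1) (by omega)]

/-- shifted continuant -/
def S (t : ℕ → R) (a l : ℕ) : R := cheb l (fun q => t (a + q))

lemma S_zero (t : ℕ → R) (a : ℕ) : S t a 0 = 1 := rfl

lemma S_one (t : ℕ → R) (a : ℕ) : S t a 1 = t a := by
  show t (a + 0) = t a
  rw [Nat.add_zero]

lemma S_rec (t : ℕ → R) (a l : ℕ) :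
    S t a (l + 2) = t (a + l + 1) * S t a (l + 1) - S t a l := by
  show (fun q => t (a + q)) (l+1) * cheb (l+1) _ - cheb l _ = _
  simp only [S]
  rw [show a + (l + 1) = a + l + 1 by omega]

lemma S_rec' (t : ℕ → R) (a l l' lm idx : ℕ) (h : l' = l + 2) (hm : lm = l + 1)
    (h2 : idx = a + l + 1) :
    S t a l' = t idx * S t a lm - S t a l := by
  subst h hm h2; exact S_rec t a l

lemma keyA (t : ℕ → R) (e : ℕ) :
    ∀ d, S t (e+1) (d+1) * S t 0 (e+1+d) - S t 0 (e+d+2) * S t (e+1) d = S t 0 e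
  | 0 => by
    have h1 : S t 0 (e+0+2) = t (e+1) * S t 0 (e+1) - S t 0 e :=
      S_rec' t 0 e (e+0+2) _ (e+1) (by omega) (by omega) (by omega)
    rw [show e+1+0 = e+1 by omega] at *
    rw [S_one, S_zero]
    linear_combination -h1
  | d+1 => by
    have h1 : S t (e+1) (d+1+1) = t (e+d+2) * S t (e+1) (d+1) - S t (e+1) d :=
      S_rec' t (e+1) d (d+1+1) _ (e+d+2) (by omega) (by omega) (by omega)
    have h2 : S t 0 (e+(d+1)+2) = t (e+d+2) * S t 0 (e+d+2) - S t 0 (e+1+d) :=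
      S_rec' t 0 (e+1+d) (e+(d+1)+2) (e+d+2) (e+d+2) (by omega) (by omega) (by omega)
    have ih := keyA t e d
    rw [show e+1+(d+1) = e+d+2 by omega]
    linear_combination S t 0 (e+d+2) * h1 - S t (e+1) (d+1) * h2 + ih

lemma keyC (t : ℕ → R) (e d : ℕ) :
    ∀ c, S t (e+1) (d+1+c) * S t 0 (e+1+d) - S t 0 (e+d+2+c) * S t (e+1) d
      = S t 0 e * S t (e+d+2) c
  | 0 => by
    rw [show d+1+0 = d+1 by omega, show e+d+2+0 = e+d+2 by omega, S_zero, mul_one]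
    exact keyA t e d
  | 1 => by
    have h1 : S t (e+1) (d+1+1) = t (e+d+2) * S t (e+1) (d+1) - S t (e+1) d :=
      S_rec' t (e+1) d (d+1+1) _ (e+d+2) (by omega) (by omega) (by omega)
    have h2 : S t 0 (e+d+2+1) = t (e+d+2) * S t 0 (e+d+2) - S t 0 (e+1+d) :=
      S_rec' t 0 (e+1+d) (e+d+2+1) _ (e+d+2) (by omega) (by omega) (by omega)
    have ih := keyA t e d
    rw [S_one]
    linear_combination S t 0 (e+1+d) * h1 - S t (e+1) d * h2 + t (e+d+2) * ih
  | c+2 => by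
    have h1 : S t (e+1) (d+1+(c+2)) = t (e+d+c+3) * S t (e+1) (d+1+c+1) - S t (e+1) (d+1+c) :=
      S_rec' t (e+1) (d+1+c) (d+1+(c+2)) (d+1+c+1) (e+d+c+3) (by omega) (by omega) (by omega)
    have h2 : S t 0 (e+d+2+(c+2)) = t (e+d+c+3) * S t 0 (e+d+2+c+1) - S t 0 (e+d+2+c) :=
      S_rec' t 0 (e+d+2+c) (e+d+2+(c+2)) (e+d+2+c+1) (e+d+c+3) (by omega) (by omega) (by omega)
    have h3 : S t (e+d+2) (c+2) = t (e+d+c+3) * S t (e+d+2) (c+1) - S t (e+d+2) c :=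
      S_rec' t (e+d+2) c (c+2) _ (e+d+c+3) (by omega) (by omega) (by omega)
    have ih1 := keyC t e d (c+1)
    have ih0 := keyC t e d c
    rw [show d+1+(c+1) = d+1+c+1 by omega, show e+d+2+(c+1) = e+d+2+c+1 by omega] at ih1
    linear_combination S t 0 (e+1+d) * h1 - S t (e+1) d * h2 - S t 0 e * h3
      + t (e+d+c+3) * ih1 - ih0

/-- shift invariance for p-periodic index reading -/
lemma S_shift (p : ℕ) (a a' l : ℕ) (h : a % p = a' % p) :
    S (fun q => (X (q % p) : MvPolynomial ℕ ℤ)) a l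
      = S (fun q => (X (q % p) : MvPolynomial ℕ ℤ)) a' l := by
  apply cheb_congr'
  intro q _
  simp only
  rw [Nat.add_mod a q p, Nat.add_mod a' q p, h]

lemma chebP_eq_S (l p s : ℕ) :
    chebP l p s = S (fun q => (X (q % p) : MvPolynomial ℕ ℤ)) s l := by
  apply cheb_congr'
  intro q _
  rfl

end Aux

/-- the multiplication formula in tubes of rank `p`, in polynomial form. -/
theorem cheb_multiplication_tube (m n j p : ℕ) (k : ℤ) (i : ℕ)
    (hp : 1 ≤ p) (hj : j ≤ p - 1) (hi : (i : ℤ) = (j : ℤ) + k * p)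
    (hi0 : 0 < i) (hin : i < n) (hm : 0 < m) (hmn : m > n - i) :
    chebP m p j * chebP n p 0 =
      chebP (m + i) p 0 * chebP (n - i) p j +
        chebP (i - 1) p 0 * chebP (m + i - n - 1) p ((n + 1) % p) := by
  set t : ℕ → MvPolynomial ℕ ℤ := fun q => X (q % p) with ht
  have hij : i % p = j % p := by
    have h1 : ((i % p : ℕ) : ℤ) = ((j % p : ℕ) : ℤ) := by
      push_cast
      rw [hi]
      rw [Int.add_mul_emod_self_right]
    exact_mod_cast h1
  -- set up parameters
  obtain ⟨e, rfl⟩ : ∃ e, i = e + 1 := ⟨i - 1, by omega⟩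
  obtain ⟨d, hd⟩ : ∃ d, n = e + 1 + d := ⟨n - (e+1), by omega⟩
  obtain ⟨c, hc⟩ : ∃ c, m = d + 1 + c := ⟨m - d - 1, by omega⟩
  have key := keyC t e d c
  rw [chebP_eq_S, chebP_eq_S, chebP_eq_S, chebP_eq_S, chebP_eq_S, chebP_eq_S]
  rw [S_shift p j (e+1) m hij.symm]
  rw [S_shift p j (e+1) (n - (e+1)) hij.symm]
  rw [S_shift p ((n+1) % p) (n+1) (m + (e+1) - n - 1) (Nat.mod_mod_of_dvd _ dvd_rfl)]
  rw [show n - (e+1) = d by omega, show e+1-1 = e by omega,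
      show m + (e+1) - n - 1 = c by omega, show m + (e+1) = e+d+2+c by omega,
      show n + 1 = e+d+2 by omega, hc, hd]
  linear_combination key
end
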